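/- Let X be a copositive matrix and let P̄ ⊆ {1,…,p} be a nonempty set such that X(P̄) has rank |P̄| − 1 and its kernel is spanned by a strictly positive vector. Then X(P̄) is positive semidefinite. -/

import Mathlib

open Matrix BigOperators

def Copositive {p : ℕ} (X : Matrix (Fin p) (Fin p) ℝ) : Prop :=
  ∀ t : Fin p → ℝ, (∀ k, 0 ≤ t k) → 0 ≤ t ⬝ᵥ X.mulVec t

def principalSub {p : ℕ} (X : Matrix (Fin p) (Fin p) ℝ) (Q : Finset (Fin p)) :
    Matrix {k // k ∈ Q} {k // k ∈ Q} ℝ :=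
  X.submatrix (fun i => (i : Fin p)) (fun j => (j : Fin p))

theorem principalSub_posSemidef {p : ℕ} (X : Matrix (Fin p) (Fin p) ℝ)
    (hX : X.IsSymm) (hcop : Copositive X) (Q : Finset (Fin p)) (hQ : Q.Nonempty)
    (hrank : (principalSub X Q).rank = Q.card - 1)
    (tbar : {k // k ∈ Q} → ℝ) (htpos : ∀ k, 0 < tbar k)
    (htker : (principalSub X Q).mulVec tbar = 0)
    (hspan : ∀ v : {k // k ∈ Q} → ℝ, (principalSub X Q).mulVec v = 0 → ∃ c : ℝ, v = c • tbar) :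
    (principalSub X Q).PosSemidef := by
  set A := principalSub X Q with hA
  have hAsymm : A.IsSymm := by
    ext i j
    simp only [hA, principalSub, Matrix.transpose_apply, Matrix.submatrix_apply]
    exact hX.apply _ _
  -- A is copositive
  have hcopA : ∀ t : {k // k ∈ Q} → ℝ, (∀ k, 0 ≤ t k) → 0 ≤ t ⬝ᵥ A.mulVec t := by
    intro t ht
    set t' : Fin p → ℝ := fun i => if h : i ∈ Q then t ⟨i, h⟩ else 0 with ht'
    have ht'nn : ∀ i, 0 ≤ t' i := by
      intro i
      by_cases h : i ∈ Q <;> simp [ht', h]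
      exact ht _
    have key : t ⬝ᵥ A.mulVec t = t' ⬝ᵥ X.mulVec t' := by
      have inner : ∀ i : Fin p, X.mulVec t' i = ∑ k : {k // k ∈ Q}, X i k * t k := by
        intro i
        rw [Matrix.mulVec, dotProduct]
        have h1 : ∑ j : Fin p, X i j * t' j = ∑ j ∈ Q, X i j * t' j := by
          symm
          apply Finset.sum_subset (Finset.subset_univ Q)
          intro j _ hj
          simp [ht', hj]
        rw [h1, ← Finset.sum_coe_sort Q (fun j => X i j * t' j)]
        apply Finset.sum_congr rfl
        intro k _
        simp [ht', dif_pos k.2]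
      have hsub : ∑ i : Fin p, t' i * X.mulVec t' i = ∑ i ∈ Q, t' i * X.mulVec t' i := by
        symm
        apply Finset.sum_subset (Finset.subset_univ Q)
        intro j _ hj
        simp [ht', hj]
      rw [dotProduct, dotProduct, hsub,
        ← Finset.sum_coe_sort Q (fun i => t' i * X.mulVec t' i)]
      apply Finset.sum_congr rfl
      intro k _
      rw [inner k]
      simp only [ht', dif_pos k.2, Subtype.coe_eta]
      congr 1
    rw [key]
    exact hcop t' ht'nn
  -- main quadratic form argument
  have hq : ∀ v : {k // k ∈ Q} → ℝ, 0 ≤ v ⬝ᵥ A.mulVec v := by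
    intro v
    have hne : Nonempty {k // k ∈ Q} := ⟨⟨hQ.choose, hQ.choose_spec⟩⟩
    set ε : ℝ := Finset.univ.inf' (Finset.univ_nonempty) (fun k => tbar k / (|v k| + 1)) with hε
    have hεpos : 0 < ε := by
      rw [hε, Finset.lt_inf'_iff]
      intro k _
      exact div_pos (htpos k) (by positivity)
    have hnn : ∀ k, 0 ≤ tbar k + ε * v k := by
      intro k
      have h1 : ε ≤ tbar k / (|v k| + 1) := Finset.inf'_le _ (Finset.mem_univ k)
      have h2 : ε * |v k| ≤ tbar k := by
        calc ε * |v k| ≤ (tbar k / (|v k| + 1)) * |v k| := by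
              apply mul_le_mul_of_nonneg_right h1 (abs_nonneg _)
          _ ≤ tbar k := by
              rw [div_mul_eq_mul_div, div_le_iff₀ (by positivity)]
              nlinarith [abs_nonneg (v k), (htpos k).le]
      nlinarith [neg_abs_le (v k), abs_nonneg (v k), hεpos.le]
    have hcp := hcopA (tbar + ε • v) hnn
    have hAv : A.mulVec (tbar + ε • v) = ε • A.mulVec v := by
      rw [Matrix.mulVec_add, htker, Matrix.mulVec_smul, zero_add]
    rw [hAv, dotProduct_smul, add_dotProduct, smul_dotProduct] at hcp
    have htd : tbar ⬝ᵥ A.mulVec v = 0 := by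
      rw [Matrix.dotProduct_mulVec]
      have : A.vecMul tbar = 0 := by
        rw [← Matrix.mulVec_transpose, hAsymm, htker]
      rw [this, zero_dotProduct]
    rw [htd] at hcp
    have : 0 ≤ ε * (ε * (v ⬝ᵥ A.mulVec v)) := by
      simpa [smul_eq_mul] using hcp
    nlinarith [mul_pos hεpos hεpos]
  refine Matrix.PosSemidef.of_dotProduct_mulVec_nonneg ?_ ?_
  · rw [Matrix.IsHermitian]
    ext i j
    simpa using congrFun (congrFun hAsymm i) j
  · intro x
    simpa using hq x
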